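/- Let Φ be the standard normal cumulative distribution function and Φ^{−1} its inverse. For every β ∈ (0,1) and every α ∈ (0, 1/2), Φ^{−1}(α) − Φ^{−1}((1 − β)α) ≤ Φ^{−1}(1/2 + β/2). Equivalently: the gap between the α-quantile and the (1−β)α-quantile of the standard normal distribution is uniformly bounded over α ∈ (0, 1/2) by the (1+β)/2-quantile; this holds because Φ^{−1}(α) − Φ^{−1}((1−β)α) equals the β-quantile of the conditional distribution of z_α − Z given Z < z_α (Z standard normal, z_α = Φ^{−1}(α)), whose density is proportional to exp(−y(|z_α| + y/2)) on y ≥ 0 and which is stochastically dominated by the half-normal distribution. -/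

import Mathlib

open scoped BigOperators

/-- The standard normal cumulative distribution function
`Φ(z) = (2π)^{−1/2} ∫_{−∞}^{z} e^{−t²/2} dt`. -/
noncomputable def stdNormCDF (z : ℝ) : ℝ :=
  (Real.sqrt (2 * Real.pi))⁻¹ * ∫ t in Set.Iic z, Real.exp (-(t ^ 2) / 2)

/-- The inverse (quantile function) of the standard normal CDF. -/
noncomputable def PhiInv : ℝ → ℝ := Function.invFun stdNormCDF

open Real MeasureTheory Set Filter Topology

noncomputable def phiPDF (z : ℝ) : ℝ :=
  (Real.sqrt (2 * Real.pi))⁻¹ * Real.exp (-(z ^ 2) / 2)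

lemma phiPDF_pos (z : ℝ) : 0 < phiPDF z := by
  have : (0:ℝ) < Real.sqrt (2 * Real.pi) :=
    Real.sqrt_pos.2 (by positivity)
  exact mul_pos (inv_pos.2 this) (Real.exp_pos _)

lemma gauss_integrable : Integrable (fun t : ℝ => Real.exp (-(t ^ 2) / 2)) := by
  have := integrable_exp_neg_mul_sq (b := (1/2 : ℝ)) (by norm_num)
  convert this using 2 with t
  ring_nf

lemma gauss_total : (∫ t : ℝ, Real.exp (-(t ^ 2) / 2)) = Real.sqrt (2 * Real.pi) := by
  have := integral_gaussian (1/2 : ℝ)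
  rw [show Real.pi / (1/2) = 2 * Real.pi by ring] at this
  rw [← this]
  congr 1 with t
  ring_nf

lemma hasDerivAt_stdNormCDF (z : ℝ) : HasDerivAt stdNormCDF (phiPDF z) z := by
  have hint : Integrable (fun t : ℝ => Real.exp (-(t ^ 2) / 2)) := gauss_integrable
  have hcont : Continuous (fun t : ℝ => Real.exp (-(t ^ 2) / 2)) := by continuity
  have heq : stdNormCDF = fun z =>
      (Real.sqrt (2 * Real.pi))⁻¹ *
        ((∫ t in Set.Iic (0:ℝ), Real.exp (-(t ^ 2) / 2)) +
          ∫ t in (0:ℝ)..z, Real.exp (-(t ^ 2) / 2)) := by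
    funext x
    unfold stdNormCDF
    rw [← intervalIntegral.integral_Iic_sub_Iic hint.integrableOn hint.integrableOn]
    ring
  rw [heq]
  have h1 : HasDerivAt (fun x => ∫ t in (0:ℝ)..x, Real.exp (-(t ^ 2) / 2))
      (Real.exp (-(z ^ 2) / 2)) z :=
    intervalIntegral.integral_hasDerivAt_right hint.intervalIntegrable
      hcont.aestronglyMeasurable.stronglyMeasurableAtFilter hcont.continuousAt
  simpa [phiPDF, mul_comm] using ((h1.const_add _).const_mul ((Real.sqrt (2 * Real.pi))⁻¹))

lemma stdNormCDF_symm (z : ℝ) : stdNormCDF (-z) = 1 - stdNormCDF z := by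
  have hint := gauss_integrable
  have h1 : (∫ t in Set.Iic (-z), Real.exp (-(t ^ 2) / 2))
      = ∫ t in Set.Ioi z, Real.exp (-(t ^ 2) / 2) := by
    have := integral_comp_neg_Iic (c := -z) (f := fun t : ℝ => Real.exp (-(t ^ 2) / 2))
    simp only [neg_neg, neg_sq] at this
    exact this
  have h2 := intervalIntegral.integral_Iic_add_Ioi (b := z) hint.integrableOn hint.integrableOn
  unfold stdNormCDF
  rw [h1]
  have hs : (0:ℝ) < Real.sqrt (2 * Real.pi) := Real.sqrt_pos.2 (by positivity)
  have h3 : (∫ t in Set.Ioi z, Real.exp (-(t ^ 2) / 2))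
      = Real.sqrt (2 * Real.pi) - ∫ t in Set.Iic z, Real.exp (-(t ^ 2) / 2) := by
    rw [← gauss_total]; linarith [h2]
  rw [h3, mul_sub, inv_mul_cancel₀ hs.ne']

lemma stdNormCDF_zero : stdNormCDF 0 = 1/2 := by
  have := stdNormCDF_symm 0
  rw [neg_zero] at this
  linarith

lemma stdNormCDF_nonneg (z : ℝ) : 0 ≤ stdNormCDF z := by
  unfold stdNormCDF
  have hs : (0:ℝ) < Real.sqrt (2 * Real.pi) := Real.sqrt_pos.2 (by positivity)
  have : 0 ≤ ∫ t in Set.Iic z, Real.exp (-(t ^ 2) / 2) :=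
    setIntegral_nonneg measurableSet_Iic (fun t _ => (Real.exp_pos _).le)
  positivity

lemma stdNormCDF_strictMono : StrictMono stdNormCDF := by
  apply strictMono_of_deriv_pos
  intro x
  rw [(hasDerivAt_stdNormCDF x).deriv]
  exact phiPDF_pos x

lemma stdNormCDF_pos (z : ℝ) : 0 < stdNormCDF z :=
  lt_of_le_of_lt (stdNormCDF_nonneg (z - 1)) (stdNormCDF_strictMono (by linarith))

lemma stdNormCDF_lt_one (z : ℝ) : stdNormCDF z < 1 := by
  have := stdNormCDF_symm z
  have := stdNormCDF_pos (-z)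
  linarith

lemma hasDerivAt_phiPDF (z : ℝ) : HasDerivAt phiPDF (-z * phiPDF z) z := by
  have h : HasDerivAt (fun z : ℝ => -(z ^ 2) / 2) (-z) z := by
    have := ((hasDerivAt_pow 2 z).neg).div_const 2
    norm_num at this
    exact this.congr_deriv (by ring)
  have h2 := (h.exp).const_mul ((Real.sqrt (2 * Real.pi))⁻¹)
  unfold phiPDF
  exact h2.congr_deriv (by ring)

lemma stdNormCDF_le_exp {z : ℝ} (hz : z ≤ -2) :
    stdNormCDF z ≤ (Real.sqrt (2 * Real.pi))⁻¹ * Real.exp z := by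
  unfold stdNormCDF
  have hs : (0:ℝ) ≤ (Real.sqrt (2 * Real.pi))⁻¹ := by positivity
  have hmono : (∫ t in Set.Iic z, Real.exp (-(t ^ 2) / 2)) ≤ ∫ t in Set.Iic z, Real.exp t := by
    apply setIntegral_mono_on gauss_integrable.integrableOn (integrableOn_exp_Iic z)
      measurableSet_Iic
    intro t ht
    apply Real.exp_le_exp.2
    simp only [Set.mem_Iic] at ht
    nlinarith
  calc (Real.sqrt (2 * Real.pi))⁻¹ * ∫ t in Set.Iic z, Real.exp (-(t ^ 2) / 2)
      ≤ (Real.sqrt (2 * Real.pi))⁻¹ * ∫ t in Set.Iic z, Real.exp t :=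
        mul_le_mul_of_nonneg_left hmono hs
    _ = (Real.sqrt (2 * Real.pi))⁻¹ * Real.exp z := by rw [integral_exp_Iic]

lemma phiPDF_le_exp {z : ℝ} (hz : z ≤ -2) :
    phiPDF z ≤ (Real.sqrt (2 * Real.pi))⁻¹ * Real.exp z := by
  unfold phiPDF
  have hs : (0:ℝ) ≤ (Real.sqrt (2 * Real.pi))⁻¹ := by positivity
  exact mul_le_mul_of_nonneg_left (Real.exp_le_exp.2 (by nlinarith)) hs

lemma tendsto_cexp_atBot : Tendsto (fun z : ℝ => (Real.sqrt (2 * Real.pi))⁻¹ * Real.exp z)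
    atBot (𝓝 0) := by
  have := Real.tendsto_exp_atBot.const_mul ((Real.sqrt (2 * Real.pi))⁻¹)
  simpa using this

lemma tendsto_stdNormCDF_atBot : Tendsto stdNormCDF atBot (𝓝 0) := by
  apply tendsto_of_tendsto_of_tendsto_of_le_of_le' tendsto_const_nhds tendsto_cexp_atBot
  · exact Eventually.of_forall fun z => stdNormCDF_nonneg z
  · filter_upwards [eventually_le_atBot (-2 : ℝ)] with z hz
    exact stdNormCDF_le_exp hz

lemma tendsto_stdNormCDF_atTop : Tendsto stdNormCDF atTop (𝓝 1) := by
  have h : Tendsto (fun z : ℝ => 1 - stdNormCDF (-z)) atTop (𝓝 (1 - 0)) :=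
    tendsto_const_nhds.sub (tendsto_stdNormCDF_atBot.comp tendsto_neg_atTop_atBot)
  simp only [sub_zero] at h
  apply h.congr
  intro z
  have := stdNormCDF_symm (-z)
  rw [neg_neg] at this
  linarith

noncomputable def millsK (z : ℝ) : ℝ := phiPDF z + z * stdNormCDF z

lemma hasDerivAt_millsK (z : ℝ) : HasDerivAt millsK (stdNormCDF z) z := by
  have h := (hasDerivAt_phiPDF z).add ((hasDerivAt_id z).mul (hasDerivAt_stdNormCDF z))
  unfold millsK
  exact h.congr_deriv (by simp only [id_eq, one_mul]; ring)

lemma millsK_mono : Monotone millsK :=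
  monotone_of_deriv_nonneg (fun x => (hasDerivAt_millsK x).differentiableAt)
    (fun x => by rw [(hasDerivAt_millsK x).deriv]; exact stdNormCDF_nonneg x)

lemma tendsto_zexp_atBot : Tendsto (fun z : ℝ => z * Real.exp z) atBot (𝓝 0) := by
  have h := (tendsto_pow_mul_exp_neg_atTop_nhds_zero 1).comp tendsto_neg_atBot_atTop
  have h2 := h.neg
  simp only [neg_zero] at h2
  apply h2.congr
  intro z
  simp [Function.comp]

lemma tendsto_millsK_atBot : Tendsto millsK atBot (𝓝 0) := by
  have hphi : Tendsto phiPDF atBot (𝓝 0) := by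
    apply tendsto_of_tendsto_of_tendsto_of_le_of_le' tendsto_const_nhds tendsto_cexp_atBot
    · exact Eventually.of_forall fun z => (phiPDF_pos z).le
    · filter_upwards [eventually_le_atBot (-2 : ℝ)] with z hz
      exact phiPDF_le_exp hz
  have hz : Tendsto (fun z : ℝ => z * stdNormCDF z) atBot (𝓝 0) := by
    have hl : Tendsto (fun z : ℝ => (Real.sqrt (2 * Real.pi))⁻¹ * (z * Real.exp z))
        atBot (𝓝 0) := by
      have := tendsto_zexp_atBot.const_mul ((Real.sqrt (2 * Real.pi))⁻¹)
      simpa using this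
    apply tendsto_of_tendsto_of_tendsto_of_le_of_le' hl tendsto_const_nhds
    · filter_upwards [eventually_le_atBot (-2 : ℝ)] with z hz
      have h1 := stdNormCDF_le_exp hz
      have hzneg : z ≤ 0 := by linarith
      nlinarith
    · filter_upwards [eventually_le_atBot (0 : ℝ)] with z hz
      exact mul_nonpos_of_nonpos_of_nonneg hz (stdNormCDF_nonneg z)
  have := hphi.add hz
  rw [add_zero] at this
  exact this

lemma millsK_nonneg (z : ℝ) : 0 ≤ millsK z := by
  apply le_of_tendsto tendsto_millsK_atBot
  filter_upwards [eventually_le_atBot z] with w hw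
  exact millsK_mono hw

noncomputable def millsM (z : ℝ) : ℝ := stdNormCDF z / phiPDF z

lemma hasDerivAt_millsM (z : ℝ) : HasDerivAt millsM
    ((phiPDF z * phiPDF z - stdNormCDF z * (-z * phiPDF z)) / phiPDF z ^ 2) z :=
  (hasDerivAt_stdNormCDF z).div (hasDerivAt_phiPDF z) (phiPDF_pos z).ne'

lemma millsM_mono : Monotone millsM := by
  apply monotone_of_deriv_nonneg (fun x => (hasDerivAt_millsM x).differentiableAt)
  intro x
  rw [(hasDerivAt_millsM x).deriv]
  apply div_nonneg _ (sq_nonneg _)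
  have h := millsK_nonneg x
  have hp := phiPDF_pos x
  unfold millsK at h
  nlinarith

lemma key_ineq {a c : ℝ} (ha : a ≤ 0) (hc : 0 ≤ c) :
    stdNormCDF (a - c) ≤ 2 * stdNormCDF (-c) * stdNormCDF a := by
  have hg : ∀ x : ℝ, HasDerivAt (fun x => stdNormCDF (x - c) / stdNormCDF x)
      ((phiPDF (x - c) * 1 * stdNormCDF x - stdNormCDF (x - c) * phiPDF x) /
        stdNormCDF x ^ 2) x := by
    intro x
    have h1 : HasDerivAt (fun x : ℝ => stdNormCDF (x - c)) (phiPDF (x - c) * 1) x :=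
      (hasDerivAt_stdNormCDF (x - c)).comp (h₂ := stdNormCDF) x ((hasDerivAt_id x).sub_const c)
    exact h1.div (hasDerivAt_stdNormCDF x) (stdNormCDF_pos x).ne'
  have hmono : Monotone (fun x => stdNormCDF (x - c) / stdNormCDF x) := by
    apply monotone_of_deriv_nonneg (fun x => (hg x).differentiableAt)
    intro x
    rw [(hg x).deriv]
    apply div_nonneg _ (sq_nonneg _)
    have hm : millsM (x - c) ≤ millsM x := millsM_mono (by linarith)
    unfold millsM at hm
    rw [div_le_div_iff₀ (phiPDF_pos _) (phiPDF_pos _)] at hm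
    nlinarith [phiPDF_pos x, phiPDF_pos (x - c), stdNormCDF_pos x, stdNormCDF_pos (x - c)]
  have h := hmono ha
  simp only [zero_sub] at h
  rw [div_le_div_iff₀ (stdNormCDF_pos a) (stdNormCDF_pos 0), stdNormCDF_zero] at h
  linarith

lemma exists_stdNormCDF_eq {y : ℝ} (hy : y ∈ Set.Ioo (0:ℝ) 1) : ∃ z, stdNormCDF z = y := by
  obtain ⟨z₁, hz₁⟩ := (tendsto_stdNormCDF_atBot.eventually_lt_const hy.1).exists
  obtain ⟨z₂, hz₂⟩ := (tendsto_stdNormCDF_atTop.eventually_const_lt hy.2).exists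
  have hz : z₁ ≤ z₂ := le_of_lt (stdNormCDF_strictMono.lt_iff_lt.1 (lt_trans hz₁ hz₂))
  have hcont : ContinuousOn stdNormCDF (Set.Icc z₁ z₂) := fun x _ =>
    (hasDerivAt_stdNormCDF x).differentiableAt.continuousAt.continuousWithinAt
  obtain ⟨z, _, hzz⟩ := intermediate_value_Icc hz hcont ⟨hz₁.le, hz₂.le⟩
  exact ⟨z, hzz⟩

lemma stdNormCDF_PhiInv {y : ℝ} (hy : y ∈ Set.Ioo (0:ℝ) 1) : stdNormCDF (PhiInv y) = y :=
  Function.invFun_eq (exists_stdNormCDF_eq hy)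

/-- Uniform bound on normal quantile gaps: for `β ∈ (0,1)` and `α ∈ (0,1/2)`,
`Φ⁻¹(α) − Φ⁻¹((1−β)α) ≤ Φ⁻¹(1/2 + β/2)` (the right side being the `β`-quantile of the
half-normal distribution). -/
theorem normal_quantile_gap_bound
    (β α : ℝ) (hβ : β ∈ Set.Ioo (0 : ℝ) 1) (hα : α ∈ Set.Ioo (0 : ℝ) (1/2 : ℝ)) :
    PhiInv α - PhiInv ((1 - β) * α) ≤ PhiInv (1/2 + β/2) := by
  obtain ⟨hβ0, hβ1⟩ := hβ
  obtain ⟨hα0, hα2⟩ := hα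
  have ha : stdNormCDF (PhiInv α) = α := stdNormCDF_PhiInv ⟨hα0, by linarith⟩
  have hb : stdNormCDF (PhiInv ((1 - β) * α)) = (1 - β) * α :=
    stdNormCDF_PhiInv ⟨by nlinarith, by nlinarith⟩
  have hc : stdNormCDF (PhiInv (1/2 + β/2)) = 1/2 + β/2 :=
    stdNormCDF_PhiInv ⟨by linarith, by linarith⟩
  set a := PhiInv α
  set b := PhiInv ((1 - β) * α)
  set c := PhiInv (1/2 + β/2)
  have ha0 : a ≤ 0 := by
    have : stdNormCDF a < stdNormCDF 0 := by rw [ha, stdNormCDF_zero]; linarith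
    exact (stdNormCDF_strictMono.lt_iff_lt.1 this).le
  have hc0 : (0:ℝ) ≤ c := by
    have : stdNormCDF 0 < stdNormCDF c := by rw [hc, stdNormCDF_zero]; linarith
    exact (stdNormCDF_strictMono.lt_iff_lt.1 this).le
  have hnegc : stdNormCDF (-c) = (1 - β)/2 := by rw [stdNormCDF_symm, hc]; ring
  have hle : stdNormCDF (a - c) ≤ stdNormCDF b := by
    rw [hb]
    calc stdNormCDF (a - c) ≤ 2 * stdNormCDF (-c) * stdNormCDF a := key_ineq ha0 hc0
      _ = (1 - β) * α := by rw [hnegc, ha]; ring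
  have := stdNormCDF_strictMono.le_iff_le.1 hle
  linarith
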